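/- For nonnegative reals x_1,...,x_n with m = min x_i > 0 and M = max x_i, and positive weights α_i summing to 1, the gap ∑ α_i x_i − ∏ x_i^{α_i} is at most (1/(2m)) ∑ α_i (x_i − ∑_k α_k x_k)^2. -/

import Mathlib

open Finset

private lemma cf_aux1 {s : ℝ} (hs : 1 ≤ s) : s - 1 - (s - 1) ^ 2 / 2 ≤ Real.log s := by
  have hD : ∀ t : ℝ, 0 < t →
      HasDerivAt (fun u : ℝ => Real.log u - u + 1 + (u - 1) ^ 2 / 2)
        (t⁻¹ - 1 + (t - 1)) t := by
    intro t ht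
    have h1 : HasDerivAt Real.log t⁻¹ t := Real.hasDerivAt_log ht.ne'
    have h2 : HasDerivAt (fun u : ℝ => (u - 1) ^ 2 / 2) (t - 1) t := by
      have : HasDerivAt (fun u : ℝ => (u - 1) ^ 2) (2 * (t - 1)) t := by
        simpa using (((hasDerivAt_id t).sub_const 1).fun_pow 2)
      simpa [mul_comm] using this.div_const 2
    simpa using ((h1.sub (hasDerivAt_id t)).add_const 1).fun_add h2
  have hmono : MonotoneOn (fun u : ℝ => Real.log u - u + 1 + (u - 1) ^ 2 / 2)
      (Set.Ici (1 : ℝ)) := by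
    apply monotoneOn_of_deriv_nonneg (convex_Ici 1)
    · intro t ht
      exact (hD t (lt_of_lt_of_le one_pos ht)).continuousAt.continuousWithinAt
    · intro t ht
      rw [interior_Ici] at ht
      exact (hD t (lt_trans one_pos ht)).differentiableAt.differentiableWithinAt
    · intro t ht
      rw [interior_Ici] at ht
      have ht0 : (0 : ℝ) < t := lt_trans one_pos ht
      rw [(hD t ht0).deriv]
      have : t⁻¹ - 1 + (t - 1) = (t - 1) ^ 2 / t := by field_simp; ring
      rw [this]
      positivity
  have h := hmono (by simp : (1 : ℝ) ∈ Set.Ici (1 : ℝ)) (Set.mem_Ici.mpr hs) hs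
  simp only [Real.log_one] at h
  nlinarith [h]

private lemma cf_aux2 {s : ℝ} (hs0 : 0 < s) (hs : s ≤ 1) :
    s - 1 - (s - 1) ^ 2 / (2 * s) ≤ Real.log s := by
  have hD : ∀ t : ℝ, 0 < t →
      HasDerivAt (fun u : ℝ => Real.log u - u + 1 + (u - 1) ^ 2 / (2 * u))
        (t⁻¹ - 1 + ((2 * (t - 1)) * (2 * t) - (t - 1) ^ 2 * 2) / (2 * t) ^ 2) t := by
    intro t ht
    have h1 : HasDerivAt Real.log t⁻¹ t := Real.hasDerivAt_log ht.ne'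
    have hnum : HasDerivAt (fun u : ℝ => (u - 1) ^ 2) (2 * (t - 1)) t := by
      simpa using (((hasDerivAt_id t).sub_const 1).fun_pow 2)
    have hden : HasDerivAt (fun u : ℝ => 2 * u) 2 t := by
      simpa using (hasDerivAt_id t).const_mul 2
    have h2 := hnum.fun_div hden (by positivity : (2 : ℝ) * t ≠ 0)
    simpa using ((h1.sub (hasDerivAt_id t)).add_const 1).fun_add h2
  have hanti : AntitoneOn (fun u : ℝ => Real.log u - u + 1 + (u - 1) ^ 2 / (2 * u))
      (Set.Ioi (0 : ℝ)) := by
    apply antitoneOn_of_deriv_nonpos (convex_Ioi 0)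
    · intro t ht
      exact (hD t ht).continuousAt.continuousWithinAt
    · intro t ht
      rw [interior_Ioi] at ht
      exact (hD t ht).differentiableAt.differentiableWithinAt
    · intro t ht
      rw [interior_Ioi] at ht
      have htne : t ≠ 0 := ne_of_gt ht
      rw [(hD t ht).deriv]
      have : t⁻¹ - 1 + ((2 * (t - 1)) * (2 * t) - (t - 1) ^ 2 * 2) / (2 * t) ^ 2
          = -((t - 1) ^ 2 / (2 * t ^ 2)) := by field_simp; ring
      rw [this]
      have : (0:ℝ) ≤ (t - 1) ^ 2 / (2 * t ^ 2) := by positivity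
      linarith
  have h := hanti (Set.mem_Ioi.mpr hs0) (Set.mem_Ioi.mpr one_pos) hs
  simp only [Real.log_one] at h
  nlinarith [h]

private lemma cf_pointwise {m A t : ℝ} (hm : 0 < m) (hmA : m ≤ A) (hmt : m ≤ t) :
    (t - A) - A * (Real.log t - Real.log A) ≤ (t - A) ^ 2 / (2 * m) := by
  have hA : 0 < A := lt_of_lt_of_le hm hmA
  have ht : 0 < t := lt_of_lt_of_le hm hmt
  have hlog : Real.log t - Real.log A = Real.log (t / A) := (Real.log_div ht.ne' hA.ne').symm
  rw [hlog]
  rcases le_total A t with hAt | htA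
  · -- t ≥ A, use cf_aux1 with s = t/A
    have hs : 1 ≤ t / A := (one_le_div hA).mpr hAt
    have h := cf_aux1 hs
    have h2 : (t - A) - A * Real.log (t / A) ≤ (t - A) ^ 2 / (2 * A) := by
      have h3 := mul_le_mul_of_nonneg_left h hA.le
      have e1 : A * (t / A - 1 - (t / A - 1) ^ 2 / 2) = (t - A) - (t - A) ^ 2 / (2 * A) := by
        field_simp
      linarith [e1 ▸ h3]
    have h4 : (t - A) ^ 2 / (2 * A) ≤ (t - A) ^ 2 / (2 * m) := by
      apply div_le_div_of_nonneg_left (by positivity) (by positivity) (by linarith)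
    linarith
  · -- t ≤ A, use cf_aux2 with s = t/A
    have hs0 : 0 < t / A := div_pos ht hA
    have hs : t / A ≤ 1 := (div_le_one hA).mpr htA
    have h := cf_aux2 hs0 hs
    have h2 : (t - A) - A * Real.log (t / A) ≤ (t - A) ^ 2 / (2 * t) := by
      have h3 := mul_le_mul_of_nonneg_left h hA.le
      have e1 : A * (t / A - 1 - (t / A - 1) ^ 2 / (2 * (t / A)))
          = (t - A) - (t - A) ^ 2 / (2 * t) := by
        field_simp
      linarith [e1 ▸ h3]
    have h4 : (t - A) ^ 2 / (2 * t) ≤ (t - A) ^ 2 / (2 * m) := by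
      apply div_le_div_of_nonneg_left (by positivity) (by positivity) (by linarith)
    linarith

theorem cartwright_field_upper (n : ℕ) (x α : Fin (n + 1) → ℝ)
    (hx : ∀ i, 0 < x i) (hα : ∀ i, 0 < α i) (hαs : ∑ i, α i = 1) :
    ∑ i, α i * x i - ∏ i, x i ^ α i ≤
      (1 / (2 * Finset.univ.inf' Finset.univ_nonempty x)) *
        ∑ i, α i * (x i - ∑ k, α k * x k) ^ 2 := by
  set m := Finset.univ.inf' Finset.univ_nonempty x with hm_def
  obtain ⟨j, -, hj⟩ := Finset.exists_mem_eq_inf' Finset.univ_nonempty x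
  have hm_pos : 0 < m := by rw [hm_def, hj]; exact hx j
  have hm_le : ∀ i, m ≤ x i := fun i => Finset.inf'_le x (Finset.mem_univ i)
  set A := ∑ i, α i * x i with hA_def
  have hA_ge : m ≤ A := by
    calc m = ∑ i, α i * m := by rw [← Finset.sum_mul, hαs, one_mul]
    _ ≤ A := Finset.sum_le_sum fun i _ => mul_le_mul_of_nonneg_left (hm_le i) (hα i).le
  have hA_pos : 0 < A := lt_of_lt_of_le hm_pos hA_ge
  set G := ∏ i, x i ^ α i with hG_def
  have hG_pos : 0 < G :=
    Finset.prod_pos fun i _ => Real.rpow_pos_of_pos (hx i) _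
  set L := ∑ i, α i * Real.log (x i) with hL_def
  have hlogG : Real.log G = L := by
    rw [hG_def, Real.log_prod (fun i _ => (Real.rpow_pos_of_pos (hx i) _).ne')]
    exact Finset.sum_congr rfl fun i _ => Real.log_rpow (hx i) _
  have hsum : ∑ i, α i * ((x i - A) - A * (Real.log (x i) - Real.log A)) ≤
      ∑ i, α i * ((x i - A) ^ 2 / (2 * m)) :=
    Finset.sum_le_sum fun i _ =>
      mul_le_mul_of_nonneg_left (cf_pointwise hm_pos hA_ge (hm_le i)) (hα i).le
  have expand : ∑ i, α i * ((x i - A) - A * (Real.log (x i) - Real.log A)) =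
      A * Real.log A - A * L := by
    have h1 : ∀ i, α i * ((x i - A) - A * (Real.log (x i) - Real.log A)) =
        α i * x i - α i * A - A * (α i * Real.log (x i)) + (A * Real.log A) * α i := by
      intro i; ring
    rw [Finset.sum_congr rfl fun i _ => h1 i]
    rw [Finset.sum_add_distrib, Finset.sum_sub_distrib, Finset.sum_sub_distrib,
      ← Finset.mul_sum, ← Finset.mul_sum, ← Finset.sum_mul, hαs, ← hA_def, ← hL_def]
    ring
  have hlog_le : Real.log G - Real.log A ≤ G / A - 1 := by
    rw [← Real.log_div hG_pos.ne' hA_pos.ne']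
    exact Real.log_le_sub_one_of_pos (div_pos hG_pos hA_pos)
  have h2 : A - G ≤ A * Real.log A - A * L := by
    rw [← hlogG]
    have h3 := mul_le_mul_of_nonneg_left hlog_le hA_pos.le
    have e1 : A * (G / A - 1) = G - A := by field_simp
    nlinarith
  have hRHS : ∑ i, α i * ((x i - A) ^ 2 / (2 * m)) =
      (1 / (2 * m)) * ∑ i, α i * (x i - A) ^ 2 := by
    rw [Finset.mul_sum]
    exact Finset.sum_congr rfl fun i _ => by ring
  calc A - G ≤ A * Real.log A - A * L := h2
  _ = ∑ i, α i * ((x i - A) - A * (Real.log (x i) - Real.log A)) := expand.symm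
  _ ≤ ∑ i, α i * ((x i - A) ^ 2 / (2 * m)) := hsum
  _ = (1 / (2 * m)) * ∑ i, α i * (x i - A) ^ 2 := hRHS
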